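/- Time-successor closure of regions with stopwatch rates: for any rate vector (r_x, r_y) ∈ {0,1}², if there exist ν in region R and t ≥ 0 with ν + (r_x·t, r_y·t) in region R', then for every ν' ∈ R there exists t' ≥ 0 with ν' + (r_x·t', r_y·t') ∈ R'. -/
import Mathlib


/-- Two coordinate values match: either both exceed `cmax`, or they have the
same integer part and their fractional parts are simultaneously zero. -/
def coordEq (cmax : ℕ) (a b : ℝ) : Prop :=
  ((cmax : ℝ) < a ∧ (cmax : ℝ) < b) ∨
    (⌊a⌋ = ⌊b⌋ ∧ (Int.fract a = 0 ↔ Int.fract b = 0))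

/-- Region equivalence on pairs of reals. -/
def regEquiv (cmax : ℕ) (v w : ℝ × ℝ) : Prop :=
  coordEq cmax v.1 w.1 ∧ coordEq cmax v.2 w.2 ∧
  ((v.1 ≤ (cmax : ℝ) ∧ v.2 ≤ (cmax : ℝ) ∧
      Int.fract v.1 ≠ 0 ∧ Int.fract v.2 ≠ 0) →
    ((Int.fract v.1 ≤ Int.fract v.2 ↔ Int.fract w.1 ≤ Int.fract w.2) ∧
     (Int.fract v.2 ≤ Int.fract v.1 ↔ Int.fract w.2 ≤ Int.fract w.1)))

lemma floorFract (n : ℤ) (f x : ℝ) (hx : x = n + f) (h0 : 0 ≤ f) (h1 : f < 1) :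
    ⌊x⌋ = n ∧ Int.fract x = f := by
  have hfl : ⌊x⌋ = n := by
    rw [hx, Int.floor_intCast_add]
    simp [Int.floor_eq_zero_iff, Set.mem_Ico, h0, h1]
  refine ⟨hfl, ?_⟩
  rw [Int.fract, hfl, hx]; ring

lemma tri (α β α' β' : ℝ) (hα0 : 0 ≤ α) (hβ0 : 0 ≤ β) (hα'0 : 0 ≤ α') (hβ'0 : 0 ≤ β')
    (e0a : α = 0 ↔ α' = 0) (e0b : β = 0 ↔ β' = 0)
    (hord : α ≠ 0 → β ≠ 0 → (α ≤ β ↔ α' ≤ β') ∧ (β ≤ α ↔ β' ≤ α')) :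
    (α < β ↔ α' < β') ∧ (β < α ↔ β' < α') := by
  rcases eq_or_ne α 0 with h1 | h1
  · have h1' : α' = 0 := e0a.mp h1
    rcases eq_or_ne β 0 with h2 | h2
    · have h2' : β' = 0 := e0b.mp h2
      constructor <;> constructor <;> intro hh <;> simp_all <;> linarith
    · have h2' : β' ≠ 0 := fun hh => h2 (e0b.mpr hh)
      have hb : 0 < β := lt_of_le_of_ne hβ0 (Ne.symm h2)
      have hb' : 0 < β' := lt_of_le_of_ne hβ'0 (Ne.symm h2')
      subst h1 h1'
      constructor <;> constructor <;> intro hh <;> linarith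
  · have h1' : α' ≠ 0 := fun hh => h1 (e0a.mpr hh)
    rcases eq_or_ne β 0 with h2 | h2
    · have h2' : β' = 0 := e0b.mp h2
      have hb : 0 < α := lt_of_le_of_ne hα0 (Ne.symm h1)
      have hb' : 0 < α' := lt_of_le_of_ne hα'0 (Ne.symm h1')
      subst h2 h2'
      constructor <;> constructor <;> intro hh <;> linarith
    · obtain ⟨o1, o2⟩ := hord h1 h2
      constructor <;> constructor <;> intro hh
      · exact lt_of_le_of_ne (o1.mp hh.le) (fun e => absurd (o2.mpr e.ge) (not_le.mpr hh))
      · exact lt_of_le_of_ne (o1.mpr hh.le) (fun e => absurd (o2.mp e.ge) (not_le.mpr hh))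
      · exact lt_of_le_of_ne (o2.mp hh.le) (fun e => absurd (o1.mpr e.ge) (not_le.mpr hh))
      · exact lt_of_le_of_ne (o2.mpr hh.le) (fun e => absurd (o1.mp e.ge) (not_le.mpr hh))

lemma core1' (α α' f : ℝ) (p : ℤ) (hα0 : 0 ≤ α) (hα'0 : 0 ≤ α') (hα'1 : α' < 1)
    (hf0 : 0 ≤ f) (hf1 : f < 1) (hp : 0 ≤ p) (ht : 0 ≤ (p : ℝ) + f - α)
    (e0a : α = 0 ↔ α' = 0) :
    ∃ f', 0 ≤ f' ∧ f' < 1 ∧ (f = 0 ↔ f' = 0) ∧ 0 ≤ (p : ℝ) + f' - α' := by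
  have hp' : (p : ℝ) = 0 ∨ 1 ≤ (p : ℝ) := by
    rcases (by omega : p = 0 ∨ 1 ≤ p) with h | h
    · exact Or.inl (by exact_mod_cast h)
    · exact Or.inr (by exact_mod_cast h)
  rcases eq_or_ne f 0 with hf | hf
  · refine ⟨0, le_refl _, one_pos, by simp [hf], ?_⟩
    rcases hp' with h0 | h1
    · have hα : α = 0 := le_antisymm (by rw [hf] at ht; linarith) hα0
      have := e0a.mp hα; linarith [this.le, this.ge]
    · linarith
  · have hfpos : 0 < f := lt_of_le_of_ne hf0 (Ne.symm hf)
    have hp0 : (0:ℝ) ≤ (p:ℝ) := by exact_mod_cast hp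
    refine ⟨(α' + 1)/2, by linarith, by linarith, ?_, by linarith⟩
    constructor <;> intro hh <;> linarith
lemma core1 (α β α' β' f : ℝ) (p : ℤ)
    (hα0 : 0 ≤ α) (hα1 : α < 1) (hβ0 : 0 ≤ β) (hβ1 : β < 1)
    (hα'0 : 0 ≤ α') (hα'1 : α' < 1) (hβ'0 : 0 ≤ β') (hβ'1 : β' < 1)
    (hf0 : 0 ≤ f) (hf1 : f < 1)
    (hp : 0 ≤ p) (ht : 0 ≤ (p : ℝ) + f - α)
    (e0a : α = 0 ↔ α' = 0) (e0b : β = 0 ↔ β' = 0)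
    (elt : α < β ↔ α' < β') (egt : β < α ↔ β' < α') :
    ∃ f' : ℝ, 0 ≤ f' ∧ f' < 1 ∧ (f = 0 ↔ f' = 0) ∧
      (f ≤ β ↔ f' ≤ β') ∧ (β ≤ f ↔ β' ≤ f') ∧ 0 ≤ (p : ℝ) + f' - α' := by
  have hp' : (p:ℝ) = 0 ∨ 1 ≤ (p:ℝ) := by
    rcases (by omega : p = 0 ∨ 1 ≤ p) with h | h
    · exact Or.inl (by exact_mod_cast h)
    · exact Or.inr (by exact_mod_cast h)
  rcases eq_or_ne f 0 with hf | hf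
  · refine ⟨0, le_refl _, one_pos, by simp [hf], ?_, ?_, ?_⟩
    · simp [hf, hβ0, hβ'0]
    · subst hf
      constructor
      · intro hb
        have h0 : β = 0 := le_antisymm hb hβ0
        simp [e0b.mp h0]
      · intro hb
        have h0 : β' = 0 := le_antisymm hb hβ'0
        simp [e0b.mpr h0]
    · rcases hp' with h0 | h1
      · have hα : α = 0 := le_antisymm (by linarith [ht]) hα0
        have := e0a.mp hα
        linarith [h0, this.ge, this.le]
      · linarith
  · have hfpos : 0 < f := lt_of_le_of_ne hf0 (Ne.symm hf)
    rcases lt_trichotomy f β with hlt | heq | hgt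
    · -- f < β : need f' ∈ (0, β'), f' ≥ α' when p = 0
      have hb : β ≠ 0 := by intro h0; rw [h0] at hlt; linarith
      have hb' : β' ≠ 0 := fun h0 => hb (e0b.mpr h0)
      have hb'pos : 0 < β' := lt_of_le_of_ne hβ'0 (Ne.symm hb')
      rcases hp' with h0 | h1
      · have hαβ : α < β := by linarith
        have hαβ' : α' < β' := elt.mp hαβ
        refine ⟨(α' + β')/2, by linarith, by linarith, ?_, ?_, ?_, by linarith⟩
        · constructor <;> intro hh <;> linarith
        · constructor <;> intro hh <;> linarith
        · constructor <;> intro hh <;> linarith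
      · refine ⟨β'/2, by linarith, by linarith, ?_, ?_, ?_, by linarith⟩
        · constructor <;> intro hh <;> linarith
        · constructor <;> intro hh <;> linarith
        · constructor <;> intro hh <;> linarith
    · -- f = β
      have hb : β ≠ 0 := by rw [← heq]; exact hf
      have hb' : β' ≠ 0 := fun h0 => hb (e0b.mpr h0)
      have hb'pos : 0 < β' := lt_of_le_of_ne hβ'0 (Ne.symm hb')
      have hcon : 0 ≤ (p:ℝ) + β' - α' := by
        rcases hp' with h0 | h1
        · have hab : α ≤ β := by rw [← heq]; linarith
          have : ¬ β' < α' := fun hh => absurd (egt.mpr hh) (not_lt.mpr hab)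
          linarith [not_lt.mp this]
        · linarith
      exact ⟨β', hβ'0, hβ'1, by constructor <;> intro hh <;> linarith [heq],
        by constructor <;> intro hh <;> linarith [heq],
        by constructor <;> intro hh <;> linarith [heq], hcon⟩
    · -- f > β
      set f' := (max α' β' + 1)/2 with hf'
      have hm0 : 0 ≤ max α' β' := le_trans hα'0 (le_max_left _ _)
      have hm1 : max α' β' < 1 := max_lt hα'1 hβ'1
      have h1 : β' < f' := by
        have : β' ≤ max α' β' := le_max_right _ _
        rw [hf']; linarith
      have h2 : α' ≤ f' := by
        have : α' ≤ max α' β' := le_max_left _ _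
        rw [hf']; linarith
      refine ⟨f', by rw [hf']; linarith, by rw [hf']; linarith, ?_, ?_, ?_, ?_⟩
      · constructor <;> intro hh <;> [linarith; (rw [hf'] at hh; linarith)]
      · constructor <;> intro hh <;> linarith
      · constructor <;> intro hh <;> linarith
      · rcases hp' with h0 | hh1 <;> linarith
lemma core2 (α β α' β' f g : ℝ) (p q : ℤ)
    (hα0 : 0 ≤ α) (hα1 : α < 1) (hβ0 : 0 ≤ β) (hβ1 : β < 1)
    (hα'0 : 0 ≤ α') (hα'1 : α' < 1) (hβ'0 : 0 ≤ β') (hβ'1 : β' < 1)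
    (hf0 : 0 ≤ f) (hf1 : f < 1) (hg0 : 0 ≤ g) (hg1 : g < 1)
    (hp : 0 ≤ p) (hq : 0 ≤ q)
    (heq : f - α + p = g - β + q)
    (ht : 0 ≤ f - α + (p : ℝ))
    (e0a : α = 0 ↔ α' = 0) (e0b : β = 0 ↔ β' = 0)
    (elt : α < β ↔ α' < β') (egt : β < α ↔ β' < α') :
    ∃ f' g' : ℝ, 0 ≤ f' ∧ f' < 1 ∧ 0 ≤ g' ∧ g' < 1 ∧
      (f = 0 ↔ f' = 0) ∧ (g = 0 ↔ g' = 0) ∧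
      (f ≤ g ↔ f' ≤ g') ∧ (g ≤ f ↔ g' ≤ f') ∧
      f' - α' + p = g' - β' + q ∧ 0 ≤ f' - α' + (p : ℝ) := by
  have hk : q = p - 1 ∨ q = p ∨ q = p + 1 := by
    have h2 : ((q : ℝ) - p) = f - g + β - α := by linarith
    have hb1 : ((q : ℝ) - p) < 2 := by rw [h2]; linarith
    have hb2 : (-2 : ℝ) < ((q : ℝ) - p) := by rw [h2]; linarith
    have hb1' : q - p < 2 := by exact_mod_cast (by push_cast; linarith : ((q - p : ℤ) : ℝ) < 2)
    have hb2' : (-2 : ℤ) < q - p := by exact_mod_cast (by push_cast; linarith : ((-2 : ℤ) : ℝ) < ((q - p : ℤ) : ℝ))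
    omega
  have hp' : (p : ℝ) = 0 ∨ 1 ≤ (p : ℝ) := by
    rcases (by omega : p = 0 ∨ 1 ≤ p) with h | h
    · exact Or.inl (by exact_mod_cast h)
    · exact Or.inr (by exact_mod_cast h)
  rcases hk with hk | hk | hk
  · -- k = -1 : g = f + β - α + 1
    have hq' : (q : ℝ) = (p : ℝ) - 1 := by rw [hk]; push_cast; ring
    have hgf : g = f + β - α + 1 := by linarith
    have hba : β < α := by linarith
    have hba' : β' < α' := egt.mp hba
    have hp1 : 1 ≤ (p : ℝ) := by
      rcases hp' with h0 | h1
      · exfalso; have : (0:ℝ) ≤ (q:ℝ) := by exact_mod_cast hq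
        linarith
      · exact h1
    have hgpos : 0 < g := by linarith
    rcases eq_or_ne f 0 with hf | hf
    · refine ⟨0, β' - α' + 1, le_refl _, one_pos, by linarith, by linarith,
        by simp [hf], ?_, ?_, ?_, by linarith, by linarith⟩
      · constructor <;> intro hh <;> linarith
      · constructor <;> intro hh <;> linarith [hgpos]
      · constructor <;> intro hh <;> linarith [hgpos]
    · have hfpos : 0 < f := lt_of_le_of_ne hf0 (Ne.symm hf)
      have hfub : f < α - β := by linarith
      refine ⟨(α' - β')/2, 1 - (α' - β')/2, by linarith, by linarith, by linarith, by linarith,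
        ?_, ?_, ?_, ?_, by linarith, by linarith⟩
      · constructor <;> intro hh <;> linarith
      · constructor <;> intro hh <;> linarith
      · constructor <;> intro hh <;> linarith
      · constructor <;> intro hh <;> linarith
  · -- k = 0 : g = f + β - α
    have hq' : (q : ℝ) = (p : ℝ) := by rw [hk]
    have hgf : g = f + β - α := by linarith
    rcases eq_or_ne f 0 with hf | hf
    · -- f' = 0, g' = β' - α'
      have hba : ¬ β < α := by intro hh; rw [hf] at hgf; linarith
      have hba' : ¬ β' < α' := fun hh => hba (egt.mpr hh)
      have hg'0 : 0 ≤ β' - α' := by linarith [not_lt.mp hba']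
      have hcon : 0 ≤ (0:ℝ) - α' + (p : ℝ) := by
        rcases hp' with h0 | h1
        · have hα : α = 0 := le_antisymm (by rw [hf] at ht; linarith) hα0
          have := e0a.mp hα; linarith [this.le, this.ge]
        · linarith
      refine ⟨0, β' - α', le_refl _, one_pos, hg'0, by linarith, by simp [hf], ?_, ?_, ?_,
        by linarith, hcon⟩
      · constructor
        · intro hh
          have hab : β = α := by rw [hf] at hgf; linarith
          have h1 : ¬ α < β := by rw [hab]; exact lt_irrefl _
          have h2 : ¬ α' < β' := fun hh2 => h1 (elt.mpr hh2)
          linarith [not_lt.mp h2]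
        · intro hh
          have hab' : α' = β' := by linarith
          have h1 : ¬ α < β := fun hh2 => lt_irrefl β' (hab' ▸ elt.mp hh2)
          have h2 : ¬ β < α := fun hh2 => lt_irrefl β' ((hab' ▸ egt.mp hh2 : β' < β'))
          rw [hf] at hgf; linarith [not_lt.mp h1, not_lt.mp h2]
      · constructor <;> intro hh <;> linarith [hf.ge, hf.le]
      · constructor
        · intro hh
          have hab : β = α := by rw [hf] at hgf; linarith
          have h1 : ¬ α < β := by rw [hab]; exact lt_irrefl _
          have h2 : ¬ α' < β' := fun hh2 => h1 (elt.mpr hh2)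
          linarith [not_lt.mp h2]
        · intro hh
          have hab' : α' = β' := by linarith
          have h1 : ¬ α < β := fun hh2 => lt_irrefl β' (hab' ▸ elt.mp hh2)
          rw [hf]; rw [hf] at hgf; linarith [not_lt.mp h1]
    · have hfpos : 0 < f := lt_of_le_of_ne hf0 (Ne.symm hf)
      rcases eq_or_ne g 0 with hg | hg
      · -- g = 0 : f = α - β > 0, β < α
        have hab : f = α - β := by rw [hg] at hgf; linarith
        have hba : β < α := by linarith
        have hba' : β' < α' := egt.mp hba
        have hcon : 0 ≤ (α' - β') - α' + (p : ℝ) := by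
          rcases hp' with h0 | h1
          · have hβ : β = 0 := le_antisymm (by linarith [ht]) hβ0
            have := e0b.mp hβ; linarith [this.le, this.ge]
          · linarith
        refine ⟨α' - β', 0, by linarith, by linarith, le_refl _, one_pos, ?_, by simp [hg], ?_, ?_,
          by linarith, hcon⟩
        · constructor <;> intro hh <;> linarith
        · constructor <;> intro hh <;> linarith
        · constructor <;> intro hh <;> linarith
      · have hgpos : 0 < g := lt_of_le_of_ne hg0 (Ne.symm hg)
        -- generic: choose f' in (max stuff)
        have hords : (f ≤ g ↔ ¬ β' < α') ∧ (g ≤ f ↔ ¬ α' < β') := by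
          constructor
          · constructor
            · intro hh hh2; have := egt.mpr hh2; linarith
            · intro hh; by_contra hh2
              have : β < α := by linarith
              exact hh (egt.mp this)
          · constructor
            · intro hh hh2; have := elt.mpr hh2; linarith
            · intro hh; by_contra hh2
              have : α < β := by linarith
              exact hh (elt.mp this)
        rcases le_or_gt β' α' with hc | hc
        · -- f' = (α'+1)/2, g' = f' + β' - α'
          refine ⟨(α' + 1)/2, (α' + 1)/2 + β' - α', by linarith, by linarith, by linarith,
            by linarith, ?_, ?_, ?_, ?_, by linarith, ?_⟩
          · constructor <;> intro hh <;> linarith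
          · constructor <;> intro hh <;> linarith
          · constructor <;> intro hh
            · have := hords.1.mp hh; linarith [not_lt.mp this]
            · exact hords.1.mpr (by intro hh2; linarith)
          · constructor <;> intro hh
            · have := hords.2.mp hh; linarith [not_lt.mp this]
            · exact hords.2.mpr (by intro hh2; linarith)
          · rcases hp' with h0 | h1 <;> linarith
        · -- α' < β' : f' = α' + (1-β')/2, g' = (1+β')/2
          have hfeq : (α' + (1 - β')/2) + β' - α' = (1 + β')/2 := by ring
          refine ⟨α' + (1 - β')/2, (1 + β')/2, by linarith, by linarith, by linarith,
            by linarith, ?_, ?_, ?_, ?_, by linarith, ?_⟩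
          · constructor <;> intro hh <;> linarith
          · constructor <;> intro hh <;> linarith
          · constructor <;> intro hh
            · have := hords.1.mp hh; linarith [not_lt.mp this]
            · exact hords.1.mpr (by intro hh2; linarith)
          · constructor <;> intro hh
            · have := hords.2.mp hh; linarith [not_lt.mp this]
            · exact hords.2.mpr (by intro hh2; linarith)
          · rcases hp' with h0 | h1 <;> linarith
  · -- k = 1 : g = f + β - α - 1
    have hq' : (q : ℝ) = (p : ℝ) + 1 := by rw [hk]; push_cast; ring
    have hgf : g = f + β - α - 1 := by linarith
    have hab : α < β := by linarith
    have hab' : α' < β' := elt.mp hab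
    have hfpos : 0 < f := by linarith
    rcases eq_or_ne g 0 with hg | hg
    · refine ⟨1 - (β' - α'), 0, by linarith, by linarith, le_refl _, one_pos, ?_, by simp [hg],
        ?_, ?_, by linarith, ?_⟩
      · constructor <;> intro hh <;> linarith
      · constructor <;> intro hh <;> linarith
      · constructor <;> intro hh <;> linarith
      · rcases hp' with h0 | h1 <;> linarith
    · have hgpos : 0 < g := lt_of_le_of_ne hg0 (Ne.symm hg)
      refine ⟨1 - (β' - α')/2, (β' - α')/2, by linarith, by linarith, by linarith, by linarith,
        ?_, ?_, ?_, ?_, by linarith, ?_⟩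
      · constructor <;> intro hh <;> linarith
      · constructor <;> intro hh <;> linarith
      · constructor <;> intro hh <;> linarith
      · constructor <;> intro hh <;> linarith
      · rcases hp' with h0 | h1 <;> linarith

lemma regEquiv_swap {cmax : ℕ} {x y x' y' : ℝ} (h : regEquiv cmax (x, y) (x', y')) :
    regEquiv cmax (y, x) (y', x') := by
  obtain ⟨h1, h2, h3⟩ := h
  refine ⟨h2, h1, fun ⟨c1, c2, c3, c4⟩ => ?_⟩
  obtain ⟨o1, o2⟩ := h3 ⟨c2, c1, c4, c3⟩
  exact ⟨o2, o1⟩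

lemma coordEq_low {cmax : ℕ} {a a' : ℝ} (h : coordEq cmax a a') (ha : a ≤ (cmax : ℝ)) :
    ⌊a⌋ = ⌊a'⌋ ∧ (Int.fract a = 0 ↔ Int.fract a' = 0) := by
  rcases h with ⟨h1, _⟩ | h
  · linarith
  · exact h

lemma coordEq_high {cmax : ℕ} {a a' : ℝ} (h : coordEq cmax a a') (ha : (cmax : ℝ) < a) :
    (cmax : ℝ) < a' := by
  rcases h with ⟨_, h2⟩ | ⟨hfl, hfr⟩
  · exact h2
  · have h1 : ((cmax : ℕ) : ℤ) ≤ ⌊a⌋ := Int.le_floor.mpr (by exact_mod_cast ha.le)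
    have hfa' : a' = (⌊a'⌋ : ℝ) + Int.fract a' := (Int.floor_add_fract a').symm
    rcases eq_or_ne (Int.fract a) 0 with h0 | h0
    · have hae : a = (⌊a⌋ : ℝ) := by
        have := Int.floor_add_fract a
        rw [h0, add_zero] at this; exact this.symm
      have h2 : ((cmax : ℕ) : ℝ) < ((⌊a⌋ : ℤ) : ℝ) := hae ▸ ha
      have h3 : ((cmax : ℕ) : ℤ) < ⌊a⌋ := by exact_mod_cast h2
      have h4 : Int.fract a' = 0 := hfr.mp h0
      rw [hfa', h4, add_zero, ← hfl]
      exact_mod_cast h3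
    · have h4 : Int.fract a' ≠ 0 := fun hh => h0 (hfr.mpr hh)
      have h5 : 0 < Int.fract a' := lt_of_le_of_ne (Int.fract_nonneg _) (Ne.symm h4)
      have h6 : ((cmax : ℕ) : ℝ) ≤ ((⌊a⌋ : ℤ) : ℝ) := by exact_mod_cast h1
      rw [hfa', ← hfl]
      linarith

lemma L10 (cmax : ℕ) (a b a' b' : ℝ) (ha' : 0 ≤ a')
    (h : regEquiv cmax (a, b) (a', b')) (t : ℝ) (ht : 0 ≤ t) :
    ∃ t', 0 ≤ t' ∧ regEquiv cmax (a + t, b) (a' + t', b') := by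
  obtain ⟨h1, h2, h3⟩ := h
  simp only [Prod.fst, Prod.snd] at h1 h2 h3
  by_cases hA : a + t ≤ (cmax : ℝ)
  case neg =>
    have hlt : (cmax:ℝ) < a + t := not_le.mp hA
    refine ⟨(cmax:ℝ) + 1, by positivity,
      Or.inl ⟨hlt, show (cmax:ℝ) < a' + ((cmax:ℝ)+1) by linarith⟩, h2, ?_⟩
    rintro ⟨c1, -, -, -⟩
    exact absurd c1 hA
  case pos =>
  have hac : a ≤ (cmax:ℝ) := by linarith
  obtain ⟨hfl, hfr⟩ := coordEq_low h1 hac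
  set α := Int.fract a with hαdef
  set α' := Int.fract a' with hα'def
  set f := Int.fract (a + t) with hfdef
  set n := ⌊a + t⌋ with hndef
  set p := n - ⌊a⌋ with hpdef
  have hp : 0 ≤ p := by
    have : ⌊a⌋ ≤ n := Int.floor_le_floor (by linarith)
    omega
  have hfa : (⌊a⌋:ℝ) + α = a := Int.floor_add_fract a
  have hfa' : (⌊a'⌋:ℝ) + α' = a' := Int.floor_add_fract a'
  have hfat : (n:ℝ) + f = a + t := Int.floor_add_fract (a+t)
  have hpr : (p:ℝ) = (n:ℝ) - (⌊a⌋:ℝ) := by rw [hpdef]; push_cast; ring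
  have htp : 0 ≤ (p:ℝ) + f - α := by rw [hpr]; linarith
  have key : ∃ f', 0 ≤ f' ∧ f' < 1 ∧ (f = 0 ↔ f' = 0) ∧
      ((b ≤ (cmax:ℝ)) → ((f ≤ Int.fract b ↔ f' ≤ Int.fract b') ∧
        (Int.fract b ≤ f ↔ Int.fract b' ≤ f'))) ∧
      0 ≤ (p:ℝ) + f' - α' := by
    by_cases hbc : b ≤ (cmax:ℝ)
    · obtain ⟨hflb, hfrb⟩ := coordEq_low h2 hbc
      have hord := tri α (Int.fract b) α' (Int.fract b') (Int.fract_nonneg a) (Int.fract_nonneg b)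
        (Int.fract_nonneg a') (Int.fract_nonneg b') hfr hfrb
        (fun hh1 hh2 => h3 ⟨hac, hbc, hh1, hh2⟩)
      obtain ⟨f', c1, c2, c3, c4, c5, c6⟩ := core1 α (Int.fract b) α' (Int.fract b') f p
        (Int.fract_nonneg a) (Int.fract_lt_one a) (Int.fract_nonneg b) (Int.fract_lt_one b)
        (Int.fract_nonneg a') (Int.fract_lt_one a') (Int.fract_nonneg b') (Int.fract_lt_one b')
        (Int.fract_nonneg _) (Int.fract_lt_one _) hp htp hfr hfrb hord.1 hord.2
      exact ⟨f', c1, c2, c3, fun _ => ⟨c4, c5⟩, c6⟩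
    · obtain ⟨f', c1, c2, c3, c4⟩ := core1' α α' f p (Int.fract_nonneg a) (Int.fract_nonneg a')
        (Int.fract_lt_one a') (Int.fract_nonneg _) (Int.fract_lt_one _) hp htp hfr
      exact ⟨f', c1, c2, c3, fun hh => absurd hh hbc, c4⟩
  obtain ⟨f', c1, c2, c3, c4, c5⟩ := key
  refine ⟨(p:ℝ) + f' - α', c5, ?_⟩
  have hfa'' : (⌊a⌋:ℝ) + α' = a' := by rw [hfl]; exact hfa'
  have hval : a' + ((p:ℝ) + f' - α') = (n:ℝ) + f' := by
    rw [hpr]; linarith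
  obtain ⟨hfl', hfr'⟩ := floorFract n f' _ hval c1 c2
  refine ⟨Or.inr ⟨by rw [hfl'], by rw [hfr']; exact c3⟩, h2, ?_⟩
  rintro ⟨d1, d2, d3, d4⟩
  rw [hfr']
  exact c4 d2

lemma L11aux (cmax : ℕ) (a b a' b' : ℝ)
    (h : regEquiv cmax (a, b) (a', b')) (t : ℝ) (ht : 0 ≤ t) (hA : a + t ≤ (cmax:ℝ)) :
    ∃ t', 0 ≤ t' ∧ regEquiv cmax (a + t, b + t) (a' + t', b' + t') := by
  obtain ⟨h1, h2, h3⟩ := h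
  simp only [Prod.fst, Prod.snd] at h1 h2 h3
  have hac : a ≤ (cmax:ℝ) := by linarith
  obtain ⟨hfl, hfr⟩ := coordEq_low h1 hac
  set α := Int.fract a
  set α' := Int.fract a'
  set β := Int.fract b
  set β' := Int.fract b'
  set f := Int.fract (a + t)
  set n := ⌊a + t⌋
  set p := n - ⌊a⌋ with hpdef
  have hp : 0 ≤ p := by
    have : ⌊a⌋ ≤ n := Int.floor_le_floor (by linarith)
    omega
  have hfa : (⌊a⌋:ℝ) + α = a := Int.floor_add_fract a
  have hfa' : (⌊a'⌋:ℝ) + α' = a' := Int.floor_add_fract a'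
  have hfat : (n:ℝ) + f = a + t := Int.floor_add_fract (a+t)
  have hpr : (p:ℝ) = (n:ℝ) - (⌊a⌋:ℝ) := by rw [hpdef]; push_cast; ring
  have htp : 0 ≤ f - α + (p:ℝ) := by rw [hpr]; linarith
  have hfa'' : (⌊a⌋:ℝ) + α' = a' := by rw [hfl]; exact hfa'
  by_cases hbc : b ≤ (cmax:ℝ)
  · obtain ⟨hflb, hfrb⟩ := coordEq_low h2 hbc
    set g := Int.fract (b + t)
    set m := ⌊b + t⌋
    set q := m - ⌊b⌋ with hqdef
    have hq : 0 ≤ q := by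
      have : ⌊b⌋ ≤ m := Int.floor_le_floor (by linarith)
      omega
    have hfb : (⌊b⌋:ℝ) + β = b := Int.floor_add_fract b
    have hfb' : (⌊b'⌋:ℝ) + β' = b' := Int.floor_add_fract b'
    have hfbt : (m:ℝ) + g = b + t := Int.floor_add_fract (b+t)
    have hqr : (q:ℝ) = (m:ℝ) - (⌊b⌋:ℝ) := by rw [hqdef]; push_cast; ring
    have hfb'' : (⌊b⌋:ℝ) + β' = b' := by rw [hflb]; exact hfb'
    have heq : f - α + (p:ℝ) = g - β + (q:ℝ) := by rw [hpr, hqr]; linarith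
    have hord := tri α β α' β' (Int.fract_nonneg a) (Int.fract_nonneg b)
      (Int.fract_nonneg a') (Int.fract_nonneg b') hfr hfrb
      (fun hh1 hh2 => h3 ⟨hac, hbc, hh1, hh2⟩)
    obtain ⟨f', g', c1, c2, c3, c4, c5, c6, c7, c8, c9, c10⟩ := core2 α β α' β' f g p q
      (Int.fract_nonneg a) (Int.fract_lt_one a) (Int.fract_nonneg b) (Int.fract_lt_one b)
      (Int.fract_nonneg a') (Int.fract_lt_one a') (Int.fract_nonneg b') (Int.fract_lt_one b')
      (Int.fract_nonneg _) (Int.fract_lt_one _) (Int.fract_nonneg _) (Int.fract_lt_one _)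
      hp hq heq htp hfr hfrb hord.1 hord.2
    refine ⟨f' - α' + (p:ℝ), c10, ?_⟩
    have hvala : a' + (f' - α' + (p:ℝ)) = (n:ℝ) + f' := by rw [hpr]; linarith
    have hvalb : b' + (f' - α' + (p:ℝ)) = (m:ℝ) + g' := by rw [c9, hqr]; linarith
    obtain ⟨hflA, hfrA⟩ := floorFract n f' _ hvala c1 c2
    obtain ⟨hflB, hfrB⟩ := floorFract m g' _ hvalb c3 c4
    refine ⟨Or.inr ⟨by rw [hflA], by rw [hfrA]; exact c5⟩, ?_, ?_⟩
    · by_cases hB : b + t ≤ (cmax:ℝ)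
      · exact Or.inr ⟨by rw [hflB], by rw [hfrB]; exact c6⟩
      · have hltB : (cmax:ℝ) < b + t := not_le.mp hB
        refine Or.inl ⟨hltB, ?_⟩
        have hmc : ((cmax:ℕ):ℝ) ≤ (m:ℝ) := by
          exact_mod_cast Int.le_floor.mpr (by exact_mod_cast hltB.le)
        show (cmax:ℝ) < b' + (f' - α' + (p:ℝ))
        rcases eq_or_ne g' 0 with hg' | hg'
        · have hg : g = 0 := c6.mpr hg'
          rw [hvalb, hg']
          rw [hg] at hfbt
          linarith
        · have : 0 < g' := lt_of_le_of_ne c3 (Ne.symm hg')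
          rw [hvalb]; linarith
    · rintro ⟨d1, d2, d3, d4⟩
      rw [hfrA, hfrB]
      exact ⟨c7, c8⟩
  · have hbc' : (cmax:ℝ) < b' := coordEq_high h2 (not_le.mp hbc)
    obtain ⟨f', c1, c2, c3, c4⟩ := core1' α α' f p (Int.fract_nonneg a) (Int.fract_nonneg a')
      (Int.fract_lt_one a') (Int.fract_nonneg _) (Int.fract_lt_one _) hp (by linarith) hfr
    refine ⟨(p:ℝ) + f' - α', c4, ?_⟩
    have hvala : a' + ((p:ℝ) + f' - α') = (n:ℝ) + f' := by rw [hpr]; linarith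
    obtain ⟨hflA, hfrA⟩ := floorFract n f' _ hvala c1 c2
    refine ⟨Or.inr ⟨by rw [hflA], by rw [hfrA]; exact c3⟩,
      Or.inl ⟨show (cmax:ℝ) < b + t by linarith [not_le.mp hbc],
        show (cmax:ℝ) < b' + ((p:ℝ) + f' - α') by linarith [c4]⟩, ?_⟩
    rintro ⟨-, d2, -, -⟩
    have : (cmax:ℝ) < b + t := by linarith [not_le.mp hbc]
    exact absurd d2 (not_le.mpr this)

lemma L11 (cmax : ℕ) (a b a' b' : ℝ) (ha' : 0 ≤ a') (hb' : 0 ≤ b')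
    (h : regEquiv cmax (a, b) (a', b')) (t : ℝ) (ht : 0 ≤ t) :
    ∃ t', 0 ≤ t' ∧ regEquiv cmax (a + t, b + t) (a' + t', b' + t') := by
  by_cases hA : a + t ≤ (cmax:ℝ)
  · exact L11aux cmax a b a' b' h t ht hA
  · by_cases hB : b + t ≤ (cmax:ℝ)
    · obtain ⟨t', ht', hre⟩ := L11aux cmax b a b' a' (regEquiv_swap h) t ht hB
      exact ⟨t', ht', regEquiv_swap hre⟩
    · refine ⟨(cmax:ℝ) + 1, by positivity,
        Or.inl ⟨not_le.mp hA, show (cmax:ℝ) < a' + ((cmax:ℝ)+1) by linarith⟩,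
        Or.inl ⟨not_le.mp hB, show (cmax:ℝ) < b' + ((cmax:ℝ)+1) by linarith⟩, ?_⟩
      rintro ⟨d1, -, -, -⟩
      exact absurd d1 hA

/-- Time-successor closure of regions under stopwatch rates: for rates
`r_x, r_y ∈ {0,1}`, if some point of the region of `ν` flows in time `t` to
the region of `ν + (r_x·t, r_y·t)`, then every region-equivalent `ν'` flows
in some time `t'` to that same region. -/
theorem stmt_17 (cmax : ℕ) (rx ry : ℝ)
    (hrx : rx ∈ ({0, 1} : Set ℝ)) (hry : ry ∈ ({0, 1} : Set ℝ))
    (ν ν' : ℝ × ℝ) (hν : 0 ≤ ν.1 ∧ 0 ≤ ν.2) (hν' : 0 ≤ ν'.1 ∧ 0 ≤ ν'.2)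
    (h : regEquiv cmax ν ν') (t : ℝ) (ht : 0 ≤ t) :
    ∃ t' : ℝ, 0 ≤ t' ∧
      regEquiv cmax (ν.1 + rx * t, ν.2 + ry * t) (ν'.1 + rx * t', ν'.2 + ry * t') := by
  simp only [Set.mem_insert_iff, Set.mem_singleton_iff] at hrx hry
  obtain ⟨hy1, hy2⟩ := hν'
  have hpair : regEquiv cmax (ν.1, ν.2) (ν'.1, ν'.2) := h
  rcases hrx with rfl | rfl <;> rcases hry with rfl | rfl
  · exact ⟨0, le_refl 0, by simpa using h⟩
  · obtain ⟨t', ht', hre⟩ := L10 cmax ν.2 ν.1 ν'.2 ν'.1 hy2 (regEquiv_swap hpair) t ht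
    exact ⟨t', ht', by simpa using regEquiv_swap hre⟩
  · obtain ⟨t', ht', hre⟩ := L10 cmax ν.1 ν.2 ν'.1 ν'.2 hy1 hpair t ht
    exact ⟨t', ht', by simpa using hre⟩
  · obtain ⟨t', ht', hre⟩ := L11 cmax ν.1 ν.2 ν'.1 ν'.2 hy1 hy2 hpair t ht
    exact ⟨t', ht', by simpa using hre⟩
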